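/- Let H be a complex Hilbert space, {e_j}_{j=1}^N an orthonormal family, π the orthogonal projection onto its span, R₊ : H → ℂᴺ given by (R₊u)_j = ⟨u, e_j⟩ and R₋ = R₊*. Let T : H → H be a bounded operator with ‖(1 − π) T‖ < 1. Then the Grushin problem (u, u₋) ↦ ((1 − T) u + R₋ u₋, R₊ u) from H × ℂᴺ to H × ℂᴺ is well posed, and its effective Hamiltonian is given by the operator-norm convergent series E₋₊ = (R₊ ∘ T ∘ R₋ − 1) + Σ_{k=1}^∞ R₊ ∘ T ∘ ((1 − π) ∘ T)^k ∘ R₋. -/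

import Mathlib

theorem stmt_15
    {H : Type*} [NormedAddCommGroup H] [InnerProductSpace ℂ H] [CompleteSpace H]
    {N : ℕ} (e : Fin N → H) (he : Orthonormal ℂ e)
    (π : H →L[ℂ] H)
    (hπ : ∀ u : H, π u ∈ Submodule.span ℂ (Set.range e) ∧
      u - π u ∈ (Submodule.span ℂ (Set.range e))ᗮ)
    (Rp : H →L[ℂ] (Fin N → ℂ)) (hRp : ∀ (u : H) (j : Fin N), Rp u j = inner ℂ (e j) u)
    (Rm : (Fin N → ℂ) →L[ℂ] H) (hRm : ∀ c : Fin N → ℂ, Rm c = ∑ j, c j • e j)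
    (T : H →L[ℂ] H)
    (hT : ‖(ContinuousLinearMap.id ℂ H - π).comp T‖ < 1) :
    ∃ (E : H →L[ℂ] H) (Ep : (Fin N → ℂ) →L[ℂ] H) (Em : H →L[ℂ] (Fin N → ℂ))
      (Emp : (Fin N → ℂ) →L[ℂ] (Fin N → ℂ)),
      (∀ (v : H) (vp : Fin N → ℂ),
        ((E v + Ep vp) - T (E v + Ep vp)) + Rm (Em v + Emp vp) = v ∧
        Rp (E v + Ep vp) = vp) ∧
      (∀ (u : H) (um : Fin N → ℂ),
        E ((u - T u) + Rm um) + Ep (Rp u) = u ∧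
        Em ((u - T u) + Rm um) + Emp (Rp u) = um) ∧
      Summable (fun k : ℕ =>
        Rp.comp (T.comp ((((ContinuousLinearMap.id ℂ H - π).comp T) ^ (k + 1)).comp
          Rm))) ∧
      Emp = (Rp.comp (T.comp Rm) - ContinuousLinearMap.id ℂ (Fin N → ℂ)) +
        ∑' k : ℕ,
          Rp.comp (T.comp ((((ContinuousLinearMap.id ℂ H - π).comp T) ^ (k + 1)).comp
            Rm)) := by
  classical
  set K := Submodule.span ℂ (Set.range e) with hK
  have heK : ∀ j, e j ∈ K := fun j => Submodule.subset_span (Set.mem_range_self j)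
  have hfix : ∀ x ∈ K, π x = x := by
    intro x hx
    have hmem : x - π x ∈ K ⊓ Kᗮ :=
      Submodule.mem_inf.mpr ⟨sub_mem hx (hπ x).1, (hπ x).2⟩
    have h0 : x - π x = 0 := by
      simpa [Submodule.mem_bot] using (Submodule.orthogonal_disjoint K).le_bot hmem
    exact (sub_eq_zero.mp h0).symm
  have hRmK : ∀ c, Rm c ∈ K := by
    intro c; rw [hRm]
    exact Submodule.sum_mem _ fun j _ => Submodule.smul_mem _ _ (heK j)
  have hπRm : ∀ c, π (Rm c) = Rm c := fun c => hfix _ (hRmK c)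
  have hinner : ∀ (u : H) (j : Fin N), (inner ℂ (e j) u : ℂ) = inner ℂ (e j) (π u) := by
    intro u j
    have h0 : (inner ℂ (e j) (u - π u) : ℂ) = 0 :=
      (Submodule.mem_orthogonal K _).mp (hπ u).2 (e j) (heK j)
    rw [inner_sub_right] at h0
    exact sub_eq_zero.mp h0
  have hRpπ : ∀ u, Rp (π u) = Rp u := by
    intro u; funext j; rw [hRp, hRp, ← hinner]
  have hRpRm : ∀ c, Rp (Rm c) = c := by
    intro c; funext j; rw [hRp, hRm]
    exact he.inner_right_fintype c j
  have hRmRp : ∀ u, Rm (Rp u) = π u := by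
    intro u
    obtain ⟨c, hc⟩ := (Submodule.mem_span_range_iff_exists_fun ℂ).mp (hπ u).1
    rw [hRm, ← hc]
    refine Finset.sum_congr rfl fun j _ => ?_
    rw [hRp, hinner, ← hc]
    congr 1
    exact he.inner_right_fintype c j
  set Q : H →L[ℂ] H := (ContinuousLinearMap.id ℂ H - π).comp T with hQdef
  have hQapp : ∀ u, Q u = T u - π (T u) := fun u => rfl
  have hsumQ : Summable fun n : ℕ => Q ^ n := summable_geometric_of_norm_lt_one hT
  set S : H →L[ℂ] H := ∑' n : ℕ, Q ^ n with hSdef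
  have h1 : (1 - Q) * S = 1 := mul_neg_geom_series Q hT
  have h2 : S * (1 - Q) = 1 := geom_series_mul_neg Q hT
  have hQS : ∀ w, S w - Q (S w) = w := by
    intro w
    have h := ContinuousLinearMap.ext_iff.mp h1 w
    simpa [ContinuousLinearMap.mul_apply, ContinuousLinearMap.sub_apply,
      ContinuousLinearMap.one_apply] using h
  have hSQ : ∀ w, S (w - Q w) = w := by
    intro w
    have h := ContinuousLinearMap.ext_iff.mp h2 w
    simpa [ContinuousLinearMap.mul_apply, ContinuousLinearMap.sub_apply,
      ContinuousLinearMap.one_apply] using h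
  have hRpQ : ∀ w, Rp (Q w) = 0 := by
    intro w; rw [hQapp, map_sub, hRpπ, sub_self]
  have hRpS : ∀ w, Rp (S w) = Rp w := by
    intro w
    have h := congrArg Rp (hQS w)
    rw [map_sub, hRpQ, sub_zero] at h
    exact h
  have key : ∀ w, S w - T (S w) + π (T (S w)) = w := by
    intro w
    have h := hQS w
    rw [hQapp] at h
    calc S w - T (S w) + π (T (S w)) = S w - (T (S w) - π (T (S w))) := by abel
      _ = w := h
  refine ⟨S.comp (ContinuousLinearMap.id ℂ H - π), S.comp Rm,
    Rp + (Rp.comp T).comp (S.comp (ContinuousLinearMap.id ℂ H - π)),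
    (Rp.comp (T.comp Rm) - ContinuousLinearMap.id ℂ (Fin N → ℂ)) +
      (Rp.comp T).comp ((S - 1).comp Rm), ?_, ?_, ?_, ?_⟩
  · intro v vp
    constructor
    · simp only [ContinuousLinearMap.comp_apply, ContinuousLinearMap.add_apply,
        ContinuousLinearMap.sub_apply, ContinuousLinearMap.id_apply,
        ContinuousLinearMap.one_apply, map_add, map_sub, hRmRp, hπRm]
      trans ((S v - T (S v) + π (T (S v))) - (S (π v) - T (S (π v)) + π (T (S (π v)))) +
        (S (Rm vp) - T (S (Rm vp)) + π (T (S (Rm vp)))) + π v - Rm vp)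
      · abel
      · rw [key v, key (π v), key (Rm vp)]; abel
    · simp only [ContinuousLinearMap.comp_apply, ContinuousLinearMap.sub_apply,
        ContinuousLinearMap.id_apply, map_add, map_sub, hRpS, hRpπ, hRpRm]
      abel
  · intro u um
    have h := hSQ u
    rw [hQapp] at h
    constructor
    · simp only [ContinuousLinearMap.comp_apply, ContinuousLinearMap.sub_apply,
        ContinuousLinearMap.id_apply, map_add, map_sub, hπRm, hRmRp]
      trans (S u - S (T u) + S (π (T u)))
      · abel
      · calc S u - S (T u) + S (π (T u)) = S (u - (T u - π (T u))) := by
              rw [map_sub, map_sub]; abel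
          _ = u := h
    · have h' : Rp (T (S u)) - Rp (T (S (T u))) + Rp (T (S (π (T u)))) = Rp (T u) := by
        calc Rp (T (S u)) - Rp (T (S (T u))) + Rp (T (S (π (T u)))) =
            Rp (T (S (u - (T u - π (T u))))) := by simp only [map_sub]; abel
          _ = Rp (T u) := by rw [h]
      simp only [ContinuousLinearMap.comp_apply, ContinuousLinearMap.add_apply,
        ContinuousLinearMap.sub_apply, ContinuousLinearMap.id_apply,
        ContinuousLinearMap.one_apply, map_add, map_sub, hπRm, hRmRp, hRpRm]
      trans (um - Rp (T u) + (Rp (T (S u)) - Rp (T (S (T u))) + Rp (T (S (π (T u))))))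
      · abel
      · rw [h']; abel
  · have hsum1 : Summable fun k : ℕ => Q ^ (k + 1) := by
      simpa only [← pow_succ'] using hsumQ.mul_left Q
    set g : (H →L[ℂ] H) →L[ℂ] ((Fin N → ℂ) →L[ℂ] (Fin N → ℂ)) :=
      ((ContinuousLinearMap.compL ℂ (Fin N → ℂ) H (Fin N → ℂ)) (Rp.comp T)).comp
        (((ContinuousLinearMap.compL ℂ (Fin N → ℂ) H H).flip) Rm) with hg
    have hgA : ∀ A : H →L[ℂ] H, g A = Rp.comp (T.comp (A.comp Rm)) := by
      intro A; ext c; simp [hg]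
    have := hsum1.mapL g
    simpa only [hgA] using this
  · have hsum1 : Summable fun k : ℕ => Q ^ (k + 1) := by
      simpa only [← pow_succ'] using hsumQ.mul_left Q
    set g : (H →L[ℂ] H) →L[ℂ] ((Fin N → ℂ) →L[ℂ] (Fin N → ℂ)) :=
      ((ContinuousLinearMap.compL ℂ (Fin N → ℂ) H (Fin N → ℂ)) (Rp.comp T)).comp
        (((ContinuousLinearMap.compL ℂ (Fin N → ℂ) H H).flip) Rm) with hg
    have hgA : ∀ A : H →L[ℂ] H, g A = Rp.comp (T.comp (A.comp Rm)) := by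
      intro A; ext c; simp [hg]
    have hshift : (∑' k : ℕ, Q ^ (k + 1)) = S - 1 := geom_series_succ Q hT
    have hmap : g (∑' k : ℕ, Q ^ (k + 1)) = ∑' k : ℕ, g (Q ^ (k + 1)) :=
      g.map_tsum hsum1
    congr 1
    calc (Rp.comp T).comp ((S - 1).comp Rm) = g (S - 1) := by
          rw [hgA]; ext c; simp
      _ = g (∑' k : ℕ, Q ^ (k + 1)) := by rw [hshift]
      _ = ∑' k : ℕ, g (Q ^ (k + 1)) := hmap
      _ = _ := by simp only [hgA]
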